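/- Let g be a geodesic in ℍ² ⊂ ℍ³ intersecting the vertical geodesic L = {(0,0,t): t>0} between j and e^{-m} j at angle ε > 0. Then for any δ > 0 there exists ε(δ) > 0 such that if ε < ε(δ), then for every rotation angle θ ∈ [0, 2π], D(R_g^θ({e^{-m} j, -j}), {e^{-m} j, -j}) < δ, uniformly in m. -/

import Mathlib

open Real

/-- Euclidean inner product on tangent vectors to upper half-space `ℍ³ ≅ ℂ × ℝ`. -/
noncomputable def inn3 (a b : ℂ × ℝ) : ℝ := (a.1 * (starRingEnd ℂ) b.1).re + a.2 * b.2

/-- Euclidean norm of a tangent vector. -/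
noncomputable def nrm3 (a : ℂ × ℝ) : ℝ := Real.sqrt (‖a.1‖ ^ 2 + a.2 ^ 2)

/-- Euclidean angle between tangent vectors (after parallel transport). -/
noncomputable def angle3 (a b : ℂ × ℝ) : ℝ := Real.arccos (inn3 a b / (nrm3 a * nrm3 b))

/-- The quantity `D({P,u},{Q,v}) = max(|ht P/ht Q - 1|, |Z P - Z Q|, angle(u,v))`. -/
noncomputable def DD (P u Q v : ℂ × ℝ) : ℝ :=
  max (max |P.2 / Q.2 - 1| (‖P.1 - Q.1‖)) (angle3 u v)

/-- Denominator of the Poincaré extension. -/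
noncomputable def pdenom (c d : ℂ) (P : ℂ × ℝ) : ℝ :=
  ‖c * P.1 + d‖ ^ 2 + ‖c‖ ^ 2 * P.2 ^ 2

/-- The Poincaré extension of `w ↦ (aw+b)/(cw+d)` to upper half-space `ℍ³ ≅ ℂ × ℝ`. -/
noncomputable def poincare (a b c d : ℂ) (P : ℂ × ℝ) : ℂ × ℝ :=
  (((a * P.1 + b) * (starRingEnd ℂ) (c * P.1 + d) + a * (starRingEnd ℂ) c * (P.2 : ℂ) ^ 2) /
      (pdenom c d P : ℝ),
    P.2 / pdenom c d P)

/-- `e^{iε/2}`. -/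
noncomputable def ee (ε : ℝ) : ℂ := Complex.exp (Complex.I * ε / 2)

/-- Entries of the elliptic element of `PSL(2,ℂ)` fixing `p, q ∈ ℝ` with rotation angle `ε`:
the matrix `T diag(e^{iε/2}, e^{-iε/2}) T⁻¹` where `T = !![q, p; 1, 1]`. -/
noncomputable def rA (p q : ℝ) (ε : ℝ) : ℂ := ((q : ℂ) * ee ε - (p : ℂ) * ee (-ε)) / ((q : ℂ) - p)
noncomputable def rB (p q : ℝ) (ε : ℝ) : ℂ := ((p : ℂ) * q * (ee (-ε) - ee ε)) / ((q : ℂ) - p)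
noncomputable def rC (p q : ℝ) (ε : ℝ) : ℂ := (ee ε - ee (-ε)) / ((q : ℂ) - p)
noncomputable def rD (p q : ℝ) (ε : ℝ) : ℂ := ((q : ℂ) * ee (-ε) - (p : ℂ) * ee ε) / ((q : ℂ) - p)

@[fun_prop] lemma diff_conj' : Differentiable ℝ (starRingEnd ℂ) :=
  Complex.conjCLE.differentiable

@[fun_prop] lemma diff_ofReal' : Differentiable ℝ (Complex.ofReal) :=
  Complex.ofRealCLM.differentiable

@[fun_prop] lemma diff_normSq' : Differentiable ℝ (Complex.normSq) := by
  have h1 : (fun z : ℂ => Complex.normSq z) = fun z => z.re * z.re + z.im * z.im := by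
    funext z; rw [Complex.normSq_apply]
  have h2 : Differentiable ℝ (fun z : ℂ => z.re * z.re + z.im * z.im) :=
    ((Complex.reCLM.differentiable).mul Complex.reCLM.differentiable).add
      ((Complex.imCLM.differentiable).mul Complex.imCLM.differentiable)
  intro z; exact (h1 ▸ h2 : Differentiable ℝ (fun z : ℂ => Complex.normSq z)) z

lemma ee_abs (x : ℝ) : ‖ee x‖ = 1 := by
  rw [ee, show Complex.I * (x:ℂ) / 2 = ((x/2 : ℝ):ℂ) * Complex.I by push_cast; ring]
  exact Complex.norm_exp_ofReal_mul_I _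

lemma ee_conj (x : ℝ) : (starRingEnd ℂ) (ee x) = ee (-x) := by
  rw [ee, ee, ← Complex.exp_conj]
  congr 1
  simp only [map_div₀, map_mul, Complex.conj_I, Complex.conj_ofReal, Complex.conj_ofNat]
  push_cast; ring

lemma ee_mul (x : ℝ) : ee x * ee (-x) = 1 := by
  rw [ee, ee, ← Complex.exp_add,
    show Complex.I * (x:ℂ) / 2 + Complex.I * ((-x:ℝ):ℂ) / 2 = 0 by push_cast; ring]
  exact Complex.exp_zero

lemma arith1 (a c r t s : ℝ) (ha0 : 0 ≤ a) (ha : a ≤ 1) (hc0 : 0 ≤ c)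
    (hcr : c * r ≤ s) (ht : 0 < t) (htr : t ≤ r) (hr1 : r ≤ 1) (hs : 0 < s) :
    a * c * (r ^ 2 - t ^ 2) ≤ s := by
  have hr0 : 0 ≤ r := le_trans ht.le htr
  have h0 : (0:ℝ) ≤ r ^ 2 - t ^ 2 := by nlinarith
  calc a * c * (r ^ 2 - t ^ 2) = a * (c * (r ^ 2 - t ^ 2)) := by ring
  _ ≤ c * (r ^ 2 - t ^ 2) := mul_le_of_le_one_left (mul_nonneg hc0 h0) ha
  _ ≤ c * r ^ 2 := by nlinarith [mul_nonneg hc0 (sq_nonneg t)]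
  _ ≤ s * r := by nlinarith [mul_le_mul_of_nonneg_right hcr hr0]
  _ ≤ s := mul_le_of_le_one_right hs.le hr1

lemma arith2 (N s e δ : ℝ) (h1N : 1 - N ≤ s ^ 2) (hs : s ≤ e) (hs0 : 0 < s)
    (he : e < δ / 2) (he2 : e < 1 / 2) (hN : 1 / 2 ≤ N) (hδ : 0 < δ) :
    1 < (δ + 1) * N := by nlinarith

lemma arith3 (w s e N δ : ℝ) (hw : w ≤ s) (hs : s ≤ e) (he : e < δ / 2)
    (hN : 1 / 2 ≤ N) (hδ : 0 < δ) : w < δ * N := by nlinarith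

lemma arith4 (s e : ℝ) (h0 : 0 < s) (h1 : s ≤ e) (h2 : e < 1 / 2) :
    0 ≤ 1 - 2 * s ^ 2 := by nlinarith

lemma arith5 (a b N : ℝ) (h0 : 0 ≤ a) (hab : a ≤ b) (hN0 : 0 ≤ N) (hN : N ≤ 1) :
    a * N ≤ b := by nlinarith

set_option maxHeartbeats 2000000 in
/-- Lemma A.5: if the geodesic `g` (endpoints `p < 0 < q`) crosses the vertical geodesic
`L` between `j` and `e^{-m} j` at angle `ε` (so `cos ε = |p+q|/(q-p)`), then for any
`δ > 0` there is `ε(δ) > 0` such that if `ε < ε(δ)`, the rotation `R_g^θ` by any angle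
`θ ∈ [0, 2π]` moves the downward unit vector at `e^{-m} j` by less than `δ` in the
quantity `D`, uniformly in `m`. -/
theorem stmt15 : ∀ δ > (0:ℝ), ∃ ε₁ > (0:ℝ), ∀ m : ℝ, 0 < m → ∀ p q ε θ : ℝ,
    p < 0 → 0 < q →
    Real.exp (-m) ≤ Real.sqrt (-(p * q)) → Real.sqrt (-(p * q)) ≤ 1 →
    0 < ε → ε < ε₁ → Real.cos ε = |p + q| / (q - p) →
    0 ≤ θ → θ ≤ 2 * π →
    DD (poincare (rA p q θ) (rB p q θ) (rC p q θ) (rD p q θ) ((0 : ℂ), Real.exp (-m)))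
       (fderiv ℝ (poincare (rA p q θ) (rB p q θ) (rC p q θ) (rD p q θ))
         ((0 : ℂ), Real.exp (-m)) ((0 : ℂ), -1))
       ((0 : ℂ), Real.exp (-m)) ((0 : ℂ), -1) < δ := by
  intro δ hδ
  have hπpos := Real.pi_pos
  refine ⟨min (π/8) (δ/2), lt_min (by positivity) (by positivity), ?_⟩
  intro m hm p q ε θ hp hq htr' hr1' hε hεlt hcos hθ0 hθ2
  set t := Real.exp (-m) with htdef
  set r := Real.sqrt (-(p * q)) with hrdef
  have htr : t ≤ r := htr'
  have hr1 : r ≤ 1 := hr1'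
  have ht0 : 0 < t := Real.exp_pos _
  have hpq : p * q < 0 := mul_neg_of_neg_of_pos hp hq
  have hr0 : 0 < r := lt_of_lt_of_le ht0 htr
  have hr2 : r ^ 2 = -(p * q) := Real.sq_sqrt (by linarith)
  clear_value t r
  have hΔ : 0 < q - p := by linarith
  -- epsilon bounds
  have hεπ8 : ε < π/8 := lt_of_lt_of_le hεlt (min_le_left _ _)
  have hεδ2 : ε < δ/2 := lt_of_lt_of_le hεlt (min_le_right _ _)
  have hε1 : ε < 1/2 := by nlinarith [Real.pi_lt_d2]
  have hsin0 : 0 < Real.sin ε := Real.sin_pos_of_pos_of_lt_pi hε (by nlinarith)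
  have hsinle : Real.sin ε ≤ ε := Real.sin_le hε.le
  -- the key relation sin ε * (q - p) = 2 r
  have hkey : Real.sin ε * (q - p) = 2 * r := by
    have hc2 : Real.cos ε ^ 2 * (q - p) ^ 2 = (p + q) ^ 2 := by
      rw [hcos, div_pow, sq_abs]
      field_simp
    have hpyth := Real.sin_sq_add_cos_sq ε
    have h2 : (Real.sin ε * (q - p)) ^ 2 = (2 * r) ^ 2 := by nlinarith [hr2]
    have h3 : 0 ≤ Real.sin ε * (q - p) := by positivity
    calc Real.sin ε * (q - p) = Real.sqrt ((Real.sin ε * (q - p)) ^ 2) := (Real.sqrt_sq h3).symm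
    _ = Real.sqrt ((2 * r) ^ 2) := by rw [h2]
    _ = 2 * r := Real.sqrt_sq (by linarith)
  -- complex entries
  set A := rA p q θ with hA
  set B := rB p q θ with hB
  set C := rC p q θ with hC
  set D := rD p q θ with hD
  clear_value A B C D
  have hQP : ((q:ℂ) - p) ≠ 0 := by
    rw [show ((q:ℂ) - p) = ((q - p : ℝ):ℂ) by push_cast; ring]
    exact Complex.ofReal_ne_zero.2 (by linarith)
  have hr2C : ((r:ℝ):ℂ) ^ 2 = -((p:ℂ) * q) := by
    have := congrArg Complex.ofReal hr2; push_cast at this; exact this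
  have hBC : B = ((r:ℝ):ℂ) ^ 2 * C := by
    rw [hB, hC, rB, rC, hr2C]; field_simp; ring
  have hDA : D = (starRingEnd ℂ) A := by
    rw [hA, hD, rA, rD]
    simp only [map_div₀, map_sub, map_mul, Complex.conj_ofReal, ee_conj, neg_neg]
  have hCC : (starRingEnd ℂ) C = -C := by
    rw [hC, rC]
    simp only [map_div₀, map_sub, map_mul, Complex.conj_ofReal, ee_conj, neg_neg]
    field_simp
    ring
  have hdet : A * D - B * C = 1 := by
    rw [hA, hB, hC, hD, rA, rB, rC, rD]
    field_simp
    linear_combination (((q:ℂ) - p)^2) * ee_mul θ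
  set X := ‖A‖ ^ 2 with hXdef
  set Y := ‖C‖ ^ 2 with hYdef
  have hX0 : 0 ≤ X := by rw [hXdef]; positivity
  have hY0 : 0 ≤ Y := by rw [hYdef]; positivity
  clear_value X Y
  have hXY : X + r ^ 2 * Y = 1 := by
    have hAA : A * (starRingEnd ℂ) A = ((X:ℝ):ℂ) := by
      rw [Complex.mul_conj, hXdef]
      norm_cast
      rw [Complex.sq_norm]
    have hC2 : C * C = -((Y:ℝ):ℂ) := by
      have h := Complex.mul_conj C
      rw [hCC] at h
      have hy : ((Y:ℝ):ℂ) = (Complex.normSq C : ℂ) := by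
        rw [hYdef]; norm_cast; rw [Complex.sq_norm]
      rw [hy]
      linear_combination -h
    have hfin : ((X:ℝ):ℂ) + ((r:ℝ):ℂ) ^ 2 * ((Y:ℝ):ℂ) = 1 := by
      linear_combination hdet - A * hDA + C * hBC - hAA + ((r:ℝ):ℂ) ^ 2 * hC2
    exact_mod_cast hfin
  have hCqp : ‖C‖ * (q - p) ≤ 2 := by
    rw [hC, rC, norm_div, show ‖((q:ℂ) - p)‖ = q - p from by
      rw [show ((q:ℂ) - p) = ((q - p : ℝ):ℂ) by push_cast; ring, Complex.norm_real, Real.norm_eq_abs,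
        abs_of_pos hΔ]]
    rw [div_mul_cancel₀ _ (ne_of_gt hΔ)]
    calc ‖ee θ - ee (-θ)‖ ≤ ‖ee θ‖ + ‖ee (-θ)‖ := by
          simpa using norm_sub_le (ee θ) (ee (-θ))
    _ = 2 := by rw [ee_abs, ee_abs]; norm_num
  have hCr : ‖C‖ * r ≤ Real.sin ε := by
    nlinarith [norm_nonneg C, hsin0, hΔ, hkey, hCqp]
  have hYr : Y * r ^ 2 ≤ Real.sin ε ^ 2 := by
    have h := mul_self_le_mul_self (mul_nonneg (norm_nonneg C) hr0.le) hCr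
    rw [hYdef]; nlinarith [h]
  have hrY : 0 ≤ r^2 * Y := by positivity
  have hXle : X ≤ 1 := by linarith
  have hXge : 1 - Real.sin ε ^ 2 ≤ X := by nlinarith [hXY, hYr]
  have hAabs : ‖A‖ ≤ 1 := (pow_le_one_iff_of_nonneg (norm_nonneg A) two_ne_zero).1 (hXdef ▸ hXle)
  set N := X + Y * t ^ 2 with hNdef
  clear_value N
  have htr2 : Y * t ^ 2 ≤ Y * r ^ 2 := mul_le_mul_of_nonneg_left (pow_le_pow_left₀ ht0.le htr 2) hY0
  have hN1 : N ≤ 1 := by rw [hNdef]; nlinarith [hXY, htr2]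
  have hNhalf : 1/2 ≤ N := by rw [hNdef]; nlinarith [hXge, hsinle, hε1, hε, hsin0, mul_nonneg hY0 (sq_nonneg t)]
  have hN0 : 0 < N := by linarith
  have hNne : N ≠ 0 := ne_of_gt hN0
  have hpd : ∀ s : ℝ, pdenom C D ((0:ℂ), s) = X + Y * s ^ 2 := by
    intro s
    rw [pdenom]
    simp only [mul_zero, zero_add]
    rw [hDA, Complex.norm_conj, ← hXdef, ← hYdef]
  have hW : ∀ s : ℝ, B * (starRingEnd ℂ) D + A * (starRingEnd ℂ) C * ((s:ℝ):ℂ) ^ 2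
      = A * C * (((r:ℝ):ℂ) ^ 2 - ((s:ℝ):ℂ) ^ 2) := by
    intro s
    rw [hBC, hDA, hCC, Complex.conj_conj]
    ring
  -- the image point
  have hpoint : poincare A B C D ((0:ℂ), t)
      = (A * C * (((r:ℝ):ℂ) ^ 2 - ((t:ℝ):ℂ) ^ 2) / ((N:ℝ):ℂ), t / N) := by
    rw [poincare, hpd t]
    simp only [mul_zero, zero_add]
    rw [hW t, hNdef]
  -- the derivative
  set V : ℂ × ℝ := (2 * A * C * ((t:ℝ):ℂ) / ((N:ℝ):ℂ) ^ 2, (Y * t ^ 2 - X) / N ^ 2) with hVdef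
  have hNC : ((N:ℝ):ℂ) ≠ 0 := Complex.ofReal_ne_zero.2 hNne
  have hXYC : ((X:ℝ):ℂ) + ((r:ℝ):ℂ) ^ 2 * ((Y:ℝ):ℂ) = 1 := by exact_mod_cast hXY
  have hderiv : fderiv ℝ (poincare A B C D) ((0:ℂ), t) ((0:ℂ), -1) = V := by
    have hfun : (fun s : ℝ => poincare A B C D ((0:ℂ), s))
        = fun s : ℝ => (A * C * (((r:ℝ):ℂ) ^ 2 - ((s:ℝ):ℂ) ^ 2) / ((X + Y * s ^ 2 : ℝ):ℂ),
            s / (X + Y * s ^ 2)) := by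
      funext s
      rw [poincare, hpd s]
      simp only [mul_zero, zero_add]
      rw [hW s]
    have hdenR : HasDerivAt (fun s : ℝ => X + Y * s ^ 2) (Y * (2 * t)) t := by
      have h := ((hasDerivAt_pow 2 t).const_mul Y).const_add X
      simpa using h
    have hNne2 : X + Y * t ^ 2 ≠ 0 := by
      have h := hNne; rw [hNdef] at h; exact h
    have hg2 : HasDerivAt (fun s : ℝ => s / (X + Y * s ^ 2))
        ((1 * (X + Y * t ^ 2) - t * (Y * (2 * t))) / (X + Y * t ^ 2) ^ 2) t :=
      (hasDerivAt_id t).div hdenR hNne2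
    have hsC : HasDerivAt (fun s : ℝ => ((s:ℝ):ℂ)) 1 t := by
      simpa using (hasDerivAt_id t).ofReal_comp
    have hs2 : HasDerivAt (fun s : ℝ => ((s:ℝ):ℂ) ^ 2) (2 * ((t:ℝ):ℂ)) t := by
      have h := hsC.mul hsC
      have heq2 : (fun s : ℝ => ((s:ℝ):ℂ) * ((s:ℝ):ℂ)) = fun s : ℝ => ((s:ℝ):ℂ) ^ 2 := by
        funext s; ring
      rw [show ((fun s : ℝ => ((s:ℝ):ℂ)) * fun s : ℝ => ((s:ℝ):ℂ)) = fun s : ℝ => ((s:ℝ):ℂ) ^ 2 by funext s; simp [sq]] at h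
      exact h.congr_deriv (by ring)
    have hnum : HasDerivAt (fun s : ℝ => A * C * (((r:ℝ):ℂ) ^ 2 - ((s:ℝ):ℂ) ^ 2))
        (A * C * (-(2 * ((t:ℝ):ℂ)))) t := by
      simpa using (hs2.const_sub (((r:ℝ):ℂ) ^ 2)).const_mul (A * C)
    have hdenC : HasDerivAt (fun s : ℝ => ((X + Y * s ^ 2 : ℝ):ℂ)) ((Y * (2 * t) : ℝ):ℂ) t :=
      hdenR.ofReal_comp
    have hdenCne : ((X + Y * t ^ 2 : ℝ):ℂ) ≠ 0 := Complex.ofReal_ne_zero.2 hNne2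
    have hg1 : HasDerivAt
        (fun s : ℝ => A * C * (((r:ℝ):ℂ) ^ 2 - ((s:ℝ):ℂ) ^ 2) / ((X + Y * s ^ 2 : ℝ):ℂ))
        ((A * C * (-(2 * ((t:ℝ):ℂ))) * ((X + Y * t ^ 2 : ℝ):ℂ)
          - A * C * (((r:ℝ):ℂ) ^ 2 - ((t:ℝ):ℂ) ^ 2) * ((Y * (2 * t) : ℝ):ℂ))
          / ((X + Y * t ^ 2 : ℝ):ℂ) ^ 2) t :=
      hnum.div hdenC hdenCne
    have hG : HasDerivAt (fun s : ℝ => poincare A B C D ((0:ℂ), s))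
        ((A * C * (-(2 * ((t:ℝ):ℂ))) * ((X + Y * t ^ 2 : ℝ):ℂ)
          - A * C * (((r:ℝ):ℂ) ^ 2 - ((t:ℝ):ℂ) ^ 2) * ((Y * (2 * t) : ℝ):ℂ))
          / ((X + Y * t ^ 2 : ℝ):ℂ) ^ 2,
         (1 * (X + Y * t ^ 2) - t * (Y * (2 * t))) / (X + Y * t ^ 2) ^ 2) t := by
      rw [hfun]; exact HasDerivAt.prodMk hg1 hg2
    have hNz : pdenom C D ((0:ℂ), t) ≠ 0 := by
      rw [hpd]; have h := hNne; rw [hNdef] at h; exact h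
    have hzR : Complex.normSq (C * (0:ℂ) + D) + Complex.normSq C * t ^ 2 ≠ 0 := by
      have h := hNz; rw [pdenom] at h
      simpa [Complex.sq_norm] using h
    have hzC : ((Complex.normSq (C * (0:ℂ) + D) + Complex.normSq C * t ^ 2 : ℝ):ℂ) ≠ 0 :=
      Complex.ofReal_ne_zero.2 hzR
    have hdiff : DifferentiableAt ℝ (poincare A B C D) ((0:ℂ), t) := by
      have heq : poincare A B C D = fun P : ℂ × ℝ =>
          (((A * P.1 + B) * (starRingEnd ℂ) (C * P.1 + D) + A * (starRingEnd ℂ) C * ((P.2:ℝ):ℂ) ^ 2)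
             * (((Complex.normSq (C * P.1 + D) + Complex.normSq C * P.2 ^ 2 : ℝ):ℂ))⁻¹,
           P.2 * (Complex.normSq (C * P.1 + D) + Complex.normSq C * P.2 ^ 2)⁻¹) := by
        funext P
        rw [poincare, pdenom, Complex.sq_norm, Complex.sq_norm, div_eq_mul_inv, div_eq_mul_inv]
      rw [heq]
      fun_prop (disch := first | exact hzR | exact hzC)
    have hgamma : HasDerivAt (fun s : ℝ => (((0:ℂ), s) : ℂ × ℝ)) ((0:ℂ), (1:ℝ)) t :=
      HasDerivAt.prodMk (hasDerivAt_const t (0:ℂ)) (hasDerivAt_id t)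
    have hcomp : HasDerivAt (fun s : ℝ => poincare A B C D ((0:ℂ), s))
        (fderiv ℝ (poincare A B C D) ((0:ℂ), t) ((0:ℂ), (1:ℝ))) t :=
      hdiff.hasFDerivAt.comp_hasDerivAt t hgamma
    have hval := hcomp.unique hG
    have hneg : (((0:ℂ), (-1:ℝ)) : ℂ × ℝ) = -(((0:ℂ), (1:ℝ)) : ℂ × ℝ) := by
      simp [Prod.ext_iff]
    rw [hneg, map_neg, hval, hVdef, Prod.neg_mk, Prod.mk.injEq]
    constructor
    · rw [hNdef]
      have hNne2 : X + Y * t ^ 2 ≠ 0 := by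
        have h := hNne; rw [hNdef] at h; exact h
      have hd2 : (((X + Y * t ^ 2 : ℝ):ℂ)) ^ 2 ≠ 0 := pow_ne_zero 2 (Complex.ofReal_ne_zero.2 hNne2)
      rw [← neg_div, div_eq_div_iff hd2 hd2]
      push_cast
      linear_combination (2 * A * C * ((t:ℝ):ℂ) * (((X:ℝ):ℂ) + ((Y:ℝ):ℂ) * ((t:ℝ):ℂ) ^ 2) ^ 2) * hXYC
    · rw [hNdef]
      have hNne2 : X + Y * t ^ 2 ≠ 0 := by
        have h := hNne; rw [hNdef] at h; exact h
      field_simp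
      ring
  -- now the three bounds
  rw [hpoint, hderiv, DD]
  have habsW : ‖A * C * (((r:ℝ):ℂ) ^ 2 - ((t:ℝ):ℂ) ^ 2)‖ ≤ Real.sin ε := by
    rw [show (((r:ℝ):ℂ) ^ 2 - ((t:ℝ):ℂ) ^ 2) = ((r ^ 2 - t ^ 2 : ℝ):ℂ) by push_cast; ring]
    rw [norm_mul, norm_mul, Complex.norm_real, Real.norm_eq_abs,
      abs_of_nonneg (sub_nonneg.2 (pow_le_pow_left₀ ht0.le htr 2))]
    exact arith1 _ _ _ _ _ (norm_nonneg A) hAabs (norm_nonneg C) hCr ht0 htr hr1 hsin0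
  have h1N : 1 - N ≤ Real.sin ε ^ 2 := by
    have hYt : 0 ≤ Y * t ^ 2 := mul_nonneg hY0 (sq_nonneg t)
    have h := hNdef
    linarith [hXge, htr2, hYr]
  have h1 : |t / N / t - 1| < δ := by
    rw [show t / N / t = 1 / N by field_simp]
    rw [abs_of_nonneg (by rw [le_sub_iff_add_le, zero_add, le_div_iff₀ hN0, one_mul]; exact hN1)]
    rw [sub_lt_iff_lt_add, div_lt_iff₀ hN0]
    exact arith2 N (Real.sin ε) ε δ h1N hsinle hsin0 hεδ2 hε1 hNhalf hδ
  have h2 : ‖A * C * (((r:ℝ):ℂ) ^ 2 - ((t:ℝ):ℂ) ^ 2) / ((N:ℝ):ℂ) - 0‖ < δ := by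
    rw [sub_zero, norm_div, Complex.norm_real, Real.norm_eq_abs, abs_of_pos hN0, div_lt_iff₀ hN0]
    exact arith3 _ _ _ _ _ habsW hsinle hεδ2 hNhalf hδ
  have hinn : inn3 V ((0:ℂ), -1) = (X - Y * t ^ 2) / N ^ 2 := by
    rw [inn3, hVdef]
    simp only [map_zero, mul_zero, Complex.zero_re]
    ring
  have hnrm01 : nrm3 ((0:ℂ), -1) = 1 := by
    rw [nrm3]
    simp
  have habsV1 : ‖(2 * A * C * ((t:ℝ):ℂ) / ((N:ℝ):ℂ) ^ 2 : ℂ)‖ ^ 2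
      = 4 * X * Y * t ^ 2 / N ^ 4 := by
    simp only [norm_div, norm_mul, norm_pow, Complex.norm_real, Real.norm_eq_abs, Complex.norm_two]
    rw [abs_of_pos hN0, abs_of_pos ht0, hXdef, hYdef]
    field_simp
    ring
  have hnrmV : nrm3 V = 1 / N := by
    rw [nrm3, hVdef]
    simp only []
    rw [habsV1]
    rw [show 4 * X * Y * t ^ 2 / N ^ 4 + ((Y * t ^ 2 - X) / N ^ 2) ^ 2
        = ((X + Y * t ^ 2) / N ^ 2) ^ 2 from by field_simp; ring]
    rw [show X + Y * t ^ 2 = N from hNdef.symm]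
    rw [show (N : ℝ) / N ^ 2 = 1 / N from by field_simp]
    exact Real.sqrt_sq (by positivity)
  have hangle : angle3 V ((0:ℂ), -1) = Real.arccos ((X - Y * t ^ 2) / N) := by
    rw [angle3, hinn, hnrmV, hnrm01]
    congr 1
    field_simp
  have h3 : angle3 V ((0:ℂ), -1) < δ := by
    rw [hangle]
    have hc2 : Real.cos (2 * ε) = 1 - 2 * Real.sin ε ^ 2 := by
      have h := Real.cos_two_mul ε
      have hp := Real.sin_sq_add_cos_sq ε
      linarith [h, hp]
    have hnum : 1 - 2 * Real.sin ε ^ 2 ≤ X - Y * t ^ 2 := by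
      linarith [hXge, htr2, hYr]
    have hnum0 : 0 ≤ 1 - 2 * Real.sin ε ^ 2 := arith4 _ _ hsin0 hsinle hε1
    have hcos2 : Real.cos (2 * ε) ≤ (X - Y * t ^ 2) / N := by
      rw [hc2, le_div_iff₀ hN0]
      exact arith5 _ _ _ hnum0 hnum hN0.le hN1
    have harc : Real.arccos ((X - Y * t ^ 2) / N) ≤ 2 * ε := by
      calc Real.arccos ((X - Y * t ^ 2) / N) ≤ Real.arccos (Real.cos (2 * ε)) := by
            rw [Real.arccos, Real.arccos]
            linarith [Real.monotone_arcsin hcos2]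
      _ = 2 * ε := Real.arccos_cos (by linarith) (by linarith [hεπ8, hπpos])
    linarith [hεδ2, hε]
  exact max_lt (max_lt h1 h2) h3
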